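/- Let x ∈ V(ℤ) and suppose the Γ₀-orbit of x is contained in V(ℤ)\𝔘'. Then the set of MCG-last vertices in the Γ₀-orbit of x (points y with Δ(𝒱ⱼ(𝒱ᵢ(y))) ≥ Δ(y) for all i, j ∈ {1,2,3}) is finite; moreover, either all of these MCG-last vertices lie in 𝔗' or all lie in V(ℤ)\(𝔗' ∪ 𝔘'). -/

import Mathlib

/-- The Vieta involution in coordinate `i`:
`x ↦ Function.update x i (αᵢ − xⱼxₗ − xᵢ)` where `j = i+1`, `l = i+2` (mod 3). -/
def vAct (α : Fin 3 → ℤ) (i : Fin 3) (x : Fin 3 → ℤ) : Fin 3 → ℤ :=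
  Function.update x i (α i - x (i + 1) * x (i + 2) - x i)

/-- Membership in the integral cubic surface `V(ℤ)`. -/
def onV (α : Fin 3 → ℤ) (β : ℤ) (x : Fin 3 → ℤ) : Prop :=
  x 0 ^ 2 + x 1 ^ 2 + x 2 ^ 2 + x 0 * x 1 * x 2
    - α 0 * x 0 - α 1 * x 1 - α 2 * x 2 - β = 0

/-- The height function `Δ(x) = |x₁| + |x₂| + |x₃|`. -/
def delta (x : Fin 3 → ℤ) : ℤ := |x 0| + |x 1| + |x 2|

/-- Membership in the finite exceptional set `𝔗`. -/
def inT (α : Fin 3 → ℤ) (β : ℤ) (x : Fin 3 → ℤ) : Prop :=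
  onV α β x ∧ ∃ σ : Equiv.Perm (Fin 3),
    |x (σ 0)| ≤ 1 ∨ |x (σ 1) * x (σ 2)| ≤ max (3 * |α (σ 0)|) 4

/-- Membership in the exceptional set `𝔘`. -/
def inU (α : Fin 3 → ℤ) (β : ℤ) (x : Fin 3 → ℤ) : Prop :=
  onV α β x ∧ ¬ inT α β x ∧ ∃ σ : Equiv.Perm (Fin 3),
    |x (σ 0)| = 2 ∧ delta (vAct α (σ 1) x) ≤ delta x ∧
      delta (vAct α (σ 2) x) ≤ delta x

/-- `y` lies in the `Γ`-orbit of `x`: it is obtained from `x` by a finite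
sequence of Vieta involutions. -/
def gammaRel (α : Fin 3 → ℤ) (x y : Fin 3 → ℤ) : Prop :=
  ∃ L : List (Fin 3), y = L.foldl (fun z i => vAct α i z) x

/-- `y` lies in the `Γ₀`-orbit (mapping class group orbit) of `x`: it is
obtained from `x` by an even-length sequence of Vieta involutions. -/
def gamma0Rel (α : Fin 3 → ℤ) (x y : Fin 3 → ℤ) : Prop :=
  ∃ L : List (Fin 3), L.length % 2 = 0 ∧ y = L.foldl (fun z i => vAct α i z) x

/-- `y` is a descendent of `x`: obtained by a finite sequence of Vieta
involutions along which `Δ` is non-increasing at every step. -/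
def descendent (α : Fin 3 → ℤ) (x y : Fin 3 → ℤ) : Prop :=
  ∃ L : List (Fin 3), y = L.foldl (fun z i => vAct α i z) x ∧
    ∀ t < L.length,
      delta ((L.take (t + 1)).foldl (fun z i => vAct α i z) x) ≤
        delta ((L.take t).foldl (fun z i => vAct α i z) x)

/-- Membership in `𝔗' = {𝒱ᵢ(x), 𝒱ⱼ𝒱ᵢ(x) : x ∈ 𝔗}`. -/
def inT' (α : Fin 3 → ℤ) (β : ℤ) (x : Fin 3 → ℤ) : Prop :=
  ∃ y, inT α β y ∧
    ((∃ i, x = vAct α i y) ∨ ∃ i j, x = vAct α j (vAct α i y))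

/-- Membership in `𝔘' = {𝒱ᵢ(x), 𝒱ⱼ𝒱ᵢ(x) : x ∈ 𝔘}`. -/
def inU' (α : Fin 3 → ℤ) (β : ℤ) (x : Fin 3 → ℤ) : Prop :=
  ∃ y, inU α β y ∧
    ((∃ i, x = vAct α i y) ∨ ∃ i j, x = vAct α j (vAct α i y))


namespace Cor35
variable (α : Fin 3 → ℤ) (β : ℤ)

lemma vAct_self (i : Fin 3) (x : Fin 3 → ℤ) :
    vAct α i x i = α i - x (i + 1) * x (i + 2) - x i := by
  simp [vAct]

lemma vAct_ne (i k : Fin 3) (hk : k ≠ i) (x : Fin 3 → ℤ) : vAct α i x k = x k := by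
  simp [vAct, Function.update_of_ne hk]

lemma vAct_invol (i : Fin 3) (x : Fin 3 → ℤ) : vAct α i (vAct α i x) = x := by
  funext k
  by_cases hk : k = i
  · subst hk
    have h1 : (k + 1 : Fin 3) ≠ k := by fin_cases k <;> decide
    have h2 : (k + 2 : Fin 3) ≠ k := by fin_cases k <;> decide
    rw [vAct_self, vAct_ne _ _ _ h1, vAct_ne _ _ _ h2, vAct_self]
    ring
  · rw [vAct_ne _ _ _ hk, vAct_ne _ _ _ hk]

lemma fin3_cases (i : Fin 3) : i = 0 ∨ i = 1 ∨ i = 2 := by revert i; decide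

lemma onV_vAct {x : Fin 3 → ℤ} (hx : onV α β x) (i : Fin 3) : onV α β (vAct α i x) := by
  unfold onV at hx
  rcases fin3_cases i with h|h|h <;> subst h <;>
    simp [onV, vAct, Function.update, Fin.reduceAdd] <;> linear_combination hx

lemma delta_nonneg (x : Fin 3 → ℤ) : 0 ≤ delta x := by
  have := abs_nonneg (x 0); have := abs_nonneg (x 1); have := abs_nonneg (x 2)
  unfold delta; omega

lemma delta_vAct (i : Fin 3) (x : Fin 3 → ℤ) :
    delta (vAct α i x) + |x i| = delta x + |vAct α i x i| := by
  rcases fin3_cases i with h|h|h <;> subst h <;>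
    simp [delta, vAct, Function.update, Fin.reduceAdd] <;> ring


lemma fin3_facts : ∀ i : Fin 3, i ≠ i+1 ∧ i ≠ i+2 ∧ i+1 ≠ i+2 ∧ i+1+1 = i+2 ∧ i+1+2 = i
    ∧ i+2+1 = i ∧ i+2+2 = i+1 := by decide

lemma fin3_other : ∀ i j : Fin 3, j ≠ i → j = i+1 ∨ j = i+2 := by decide

lemma exists_perm : ∀ i j l : Fin 3, i ≠ j → i ≠ l → j ≠ l →
    ∃ σ : Equiv.Perm (Fin 3), σ 0 = i ∧ σ 1 = j ∧ σ 2 = l := by decide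

lemma notInT_unpack {x : Fin 3 → ℤ} (hV : onV α β x) (hT : ¬ inT α β x)
    (σ : Equiv.Perm (Fin 3)) :
    1 < |x (σ 0)| ∧ max (3 * |α (σ 0)|) 4 < |x (σ 1) * x (σ 2)| :=
  ⟨not_le.1 fun h => hT ⟨hV, σ, Or.inl h⟩, not_le.1 fun h => hT ⟨hV, σ, Or.inr h⟩⟩

lemma coords_large {x : Fin 3 → ℤ} (hV : onV α β x) (hT : ¬ inT α β x) (i : Fin 3) :
    1 < |x i| ∧ max (3 * |α i|) 4 < |x (i+1) * x (i+2)| := by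
  obtain ⟨f1, f2, f3, -⟩ := fin3_facts i
  obtain ⟨σ, h0, h1, h2⟩ := exists_perm i (i+1) (i+2) f1 f2 f3
  have := notInT_unpack α β hV hT σ
  rw [h0, h1, h2] at this
  exact this

lemma key_ineq {x : Fin 3 → ℤ} (hV : onV α β x) (hT : ¬ inT α β x) (k : Fin 3)
    (hk : delta (vAct α k x) ≤ delta x) :
    2 * (|x (k+1)| * |x (k+2)|) + 1 ≤ 6 * |x k| := by
  have hd := delta_vAct α k x
  have h' : |vAct α k x k| ≤ |x k| := by linarith
  rw [vAct_self] at h'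
  have hc := (coords_large α β hV hT k).2
  have h3 : 3 * |α k| < |x (k+1) * x (k+2)| := lt_of_le_of_lt (le_max_left _ _) hc
  have tri : |x (k+1) * x (k+2)| - |α k| ≤ |α k - x (k+1) * x (k+2) - x k| + |x k| := by
    calc |x (k+1) * x (k+2)| - |α k| ≤ |x (k+1) * x (k+2) - α k| :=
          abs_sub_abs_le_abs_sub _ _
      _ = |(α k - x (k+1) * x (k+2) - x k) + x k| := by rw [← abs_neg]; ring_nf
      _ ≤ |α k - x (k+1) * x (k+2) - x k| + |x k| := abs_add_le _ _
  rw [abs_mul] at h3 hc tri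
  linarith

lemma two_noninc {x : Fin 3 → ℤ} (hV : onV α β x) (hT : ¬ inT α β x) {i j : Fin 3}
    (hij : i ≠ j) (h1 : delta (vAct α i x) ≤ delta x)
    (h2 : delta (vAct α j x) ≤ delta x) : inU α β x := by
  have Ki := key_ineq α β hV hT i h1
  have Kj := key_ineq α β hV hT j h2
  have hai := (coords_large α β hV hT i).1
  have haj := (coords_large α β hV hT j).1
  obtain ⟨g1, g2, g3, g4, g5, g6, g7⟩ := fin3_facts i
  -- identify the third coordinate l
  rcases fin3_other i j hij.symm with hj | hj
  · -- j = i+1, l = i+2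
    subst hj
    rw [g4, g5] at Kj
    have hal := (coords_large α β hV hT (i+2)).1
    have h2c : |x (i+2)| ≤ 2 := by nlinarith [abs_nonneg (x i), abs_nonneg (x (i+1)), abs_nonneg (x (i+2))]
    have hl2 : |x (i+2)| = 2 := by omega
    obtain ⟨σ, s0, s1, s2⟩ := exists_perm (i+2) i (i+1) (Ne.symm g2) (Ne.symm g3) g1
    exact ⟨hV, hT, σ, by rw [s0, s1, s2]; exact ⟨hl2, h1, h2⟩⟩
  · -- j = i+2, l = i+1
    subst hj
    rw [g6, g7] at Kj
    have hal := (coords_large α β hV hT (i+1)).1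
    have h2c : |x (i+1)| ≤ 2 := by nlinarith [abs_nonneg (x i), abs_nonneg (x (i+1)), abs_nonneg (x (i+2))]
    have hl2 : |x (i+1)| = 2 := by omega
    obtain ⟨σ, s0, s1, s2⟩ := exists_perm (i+1) i (i+2) (Ne.symm g1) g3 g2
    exact ⟨hV, hT, σ, by rw [s0, s1, s2]; exact ⟨hl2, h1, h2⟩⟩

lemma walk_up {v : Fin 3 → ℤ} (hV : onV α β v) (hT : ¬ inT α β v) (hU : ¬ inU α β v)
    {i j : Fin 3} (hij : i ≠ j) (h : delta (vAct α i v) ≤ delta v) :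
    delta v < delta (vAct α j v) := by
  by_contra hc
  push_neg at hc
  exact hU (two_noninc α β hV hT hij h hc)


lemma into_T_dec {p : Fin 3 → ℤ} (hV : onV α β p) (hT : ¬ inT α β p) {i : Fin 3}
    (ht : inT α β (vAct α i p)) : delta (vAct α i p) < delta p := by
  have hd := delta_vAct α i p
  suffices h : |vAct α i p i| < |p i| by linarith
  obtain ⟨-, σ, hσ⟩ := ht
  have hpi : 1 < |p i| := (coords_large α β hV hT i).1
  rcases hσ with h | h
  · by_cases h0 : σ 0 = i
    · rw [h0] at h; omega
    · rw [vAct_ne α i _ h0] at h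
      exact absurd h (not_le.2 (notInT_unpack α β hV hT σ).1)
  · by_cases h1 : σ 1 = i <;> by_cases h2 : σ 2 = i
    · exact absurd (σ.injective (h1.trans h2.symm)) (by decide)
    · rw [h1, vAct_ne α i _ h2] at h
      have hb := (notInT_unpack α β hV hT σ).2
      rw [h1] at hb
      have hp2 : 1 < |p (σ 2)| := by
        obtain ⟨τ, t0, -, -⟩ := exists_perm (σ 2) (σ 1) (σ 0)
          (fun hh => (by decide : (2:Fin 3) ≠ 1) (σ.injective hh))
          (fun hh => (by decide : (2:Fin 3) ≠ 0) (σ.injective hh))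
          (fun hh => (by decide : (1:Fin 3) ≠ 0) (σ.injective hh))
        have := (notInT_unpack α β hV hT τ).1; rwa [t0] at this
      rw [abs_mul] at h hb
      nlinarith [abs_nonneg (vAct α i p i), abs_nonneg (p (σ 2))]
    · rw [h2, vAct_ne α i _ h1] at h
      have hb := (notInT_unpack α β hV hT σ).2
      rw [h2] at hb
      have hp1 : 1 < |p (σ 1)| := by
        obtain ⟨τ, t0, -, -⟩ := exists_perm (σ 1) (σ 0) (σ 2)
          (fun hh => (by decide : (1:Fin 3) ≠ 0) (σ.injective hh))
          (fun hh => (by decide : (1:Fin 3) ≠ 2) (σ.injective hh))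
          (fun hh => (by decide : (0:Fin 3) ≠ 2) (σ.injective hh))
        have := (notInT_unpack α β hV hT τ).1; rwa [t0] at this
      rw [abs_mul] at h hb
      nlinarith [abs_nonneg (vAct α i p i), abs_nonneg (p (σ 1))]
    · rw [vAct_ne α i _ h1, vAct_ne α i _ h2] at h
      exact absurd h (not_le.2 (notInT_unpack α β hV hT σ).2)


/-- fold of a word -/
def fd (α : Fin 3 → ℤ) (L : List (Fin 3)) (x : Fin 3 → ℤ) : Fin 3 → ℤ :=
  L.foldl (fun z i => vAct α i z) x

lemma fd_nil (x : Fin 3 → ℤ) : fd α [] x = x := rfl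

lemma fd_cons (a : Fin 3) (L : List (Fin 3)) (x : Fin 3 → ℤ) :
    fd α (a :: L) x = fd α L (vAct α a x) := rfl

lemma fd_append (L M : List (Fin 3)) (x : Fin 3 → ℤ) :
    fd α (L ++ M) x = fd α M (fd α L x) := List.foldl_append

lemma fd_concat (L : List (Fin 3)) (a : Fin 3) (x : Fin 3 → ℤ) :
    fd α (L ++ [a]) x = vAct α a (fd α L x) := by rw [fd_append]; rfl

lemma gammaRel_iff (x y : Fin 3 → ℤ) : gammaRel α x y ↔ ∃ L, y = fd α L x := Iff.rfl

lemma gammaRel_refl (x : Fin 3 → ℤ) : gammaRel α x x := ⟨[], rfl⟩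

lemma gammaRel_trans {x y z : Fin 3 → ℤ} (h1 : gammaRel α x y) (h2 : gammaRel α y z) :
    gammaRel α x z := by
  obtain ⟨L, rfl⟩ := h1; obtain ⟨M, rfl⟩ := h2
  exact ⟨L ++ M, (fd_append α L M x).symm⟩

lemma fd_reverse (L : List (Fin 3)) (x : Fin 3 → ℤ) : fd α L.reverse (fd α L x) = x := by
  induction L generalizing x with
  | nil => rfl
  | cons a l ih =>
      rw [fd_cons, List.reverse_cons, fd_concat, ih (vAct α a x), vAct_invol]

lemma gammaRel_symm {x y : Fin 3 → ℤ} (h : gammaRel α x y) : gammaRel α y x := by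
  obtain ⟨L, rfl⟩ := h
  exact ⟨L.reverse, (fd_reverse α L x).symm⟩

lemma gammaRel_vAct (x : Fin 3 → ℤ) (i : Fin 3) : gammaRel α x (vAct α i x) := ⟨[i], rfl⟩

lemma gamma0Rel_gammaRel {x y : Fin 3 → ℤ} (h : gamma0Rel α x y) : gammaRel α x y := by
  obtain ⟨L, -, rfl⟩ := h; exact ⟨L, rfl⟩

lemma onV_fd {x : Fin 3 → ℤ} (hx : onV α β x) (L : List (Fin 3)) : onV α β (fd α L x) := by
  induction L generalizing x with
  | nil => exact hx
  | cons a l ih => exact ih (onV_vAct α β hx a)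

lemma onV_gammaRel {x y : Fin 3 → ℤ} (hx : onV α β x) (h : gammaRel α x y) : onV α β y := by
  obtain ⟨L, rfl⟩ := h; exact onV_fd α β hx L

/-- full reduction of a word -/
def red : List (Fin 3) → List (Fin 3)
  | [] => []
  | a :: l => match red l with
    | [] => [a]
    | b :: t => if a = b then t else a :: b :: t

lemma red_cons (a : Fin 3) (l : List (Fin 3)) :
    red (a :: l) = match red l with
      | [] => [a]
      | b :: t => if a = b then t else a :: b :: t := rfl

lemma fd_red (L : List (Fin 3)) (x : Fin 3 → ℤ) : fd α (red L) x = fd α L x := by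
  induction L generalizing x with
  | nil => rfl
  | cons a l ih =>
      cases h : red l with
      | nil =>
          rw [red_cons, h]
          dsimp only
          rw [fd_cons, fd_cons, ← ih (vAct α a x), h]
      | cons b t =>
          rw [red_cons, h]
          dsimp only
          by_cases hab : a = b
          · subst hab
            rw [if_pos rfl, fd_cons, ← ih (vAct α a x), h, fd_cons, vAct_invol]
          · rw [if_neg hab, fd_cons, fd_cons (α := α) a l, ← ih (vAct α a x), h, fd_cons]

lemma chain'_red (L : List (Fin 3)) : List.Chain' (· ≠ ·) (red L) := by
  induction L with
  | nil => exact List.isChain_nil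
  | cons a l ih =>
      cases h : red l with
      | nil => rw [red_cons, h]; simp [List.Chain']
      | cons b t =>
          rw [red_cons, h]
          rw [h] at ih
          dsimp only
          by_cases hab : a = b
          · simpa [hab, List.Chain'] using ih.tail
          · simp only [if_neg hab]
            exact List.isChain_cons_cons.2 ⟨hab, ih⟩

lemma gammaRel_red {x y : Fin 3 → ℤ} (h : gammaRel α x y) :
    ∃ L, List.Chain' (· ≠ ·) L ∧ y = fd α L x := by
  obtain ⟨L, rfl⟩ := h
  exact ⟨red L, chain'_red L, (fd_red α L x).symm⟩


lemma concat_inj {L M : List (Fin 3)} {a b : Fin 3} (h : L ++ [a] = M ++ [b]) :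
    L = M ∧ a = b := by
  obtain ⟨h1, h2⟩ := List.append_inj' h rfl
  exact ⟨h1, by injection h2⟩

lemma min_spread {x u : Fin 3 → ℤ}
    (H : ∀ z, gammaRel α x z → onV α β z ∧ ¬ inT α β z ∧ ¬ inU α β z)
    (hu : gammaRel α x u) (hmin : ∀ i, delta u ≤ delta (vAct α i u)) :
    ∀ w, gammaRel α x w → delta u ≤ delta w := by
  have key : ∀ L : List (Fin 3), List.Chain' (· ≠ ·) L →
      delta u ≤ delta (fd α L u) ∧
      ∀ M a, L = M ++ [a] → delta (fd α M u) ≤ delta (fd α L u) := by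
    intro L
    induction L using List.reverseRecOn with
    | nil =>
        intro _
        exact ⟨le_refl _, fun M a hMa => absurd hMa (by simp)⟩
    | append_singleton L b ih =>
        intro hc
        obtain ⟨hcL, -, hrel⟩ := List.isChain_append.mp hc
        obtain ⟨ih1, ih2⟩ := ih hcL
        rcases List.eq_nil_or_concat L with rfl | ⟨M, a, rfl⟩
        · constructor
          · rw [fd_concat, fd_nil]; exact hmin b
          · intro M a hMa
            obtain ⟨hM, hab⟩ := concat_inj hMa
            subst hM; subst hab
            exact hmin b
        · simp only [List.concat_eq_append] at ih1 ih2 hrel ⊢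
          have hab : a ≠ b := hrel a (by simp) b (by simp)
          have hv : gammaRel α x (fd α (M ++ [a]) u) :=
            gammaRel_trans α hu ⟨M ++ [a], rfl⟩
          obtain ⟨hVv, hTv, hUv⟩ := H _ hv
          have hback : delta (vAct α a (fd α (M ++ [a]) u)) ≤ delta (fd α (M ++ [a]) u) := by
            rw [fd_concat, vAct_invol, ← fd_concat]
            exact ih2 M a rfl
          have hup := walk_up α β hVv hTv hUv hab hback
          constructor
          · rw [fd_concat (L := M ++ [a])]
            exact le_trans ih1 (le_of_lt hup)
          · intro M' a' hM'
            obtain ⟨hM, hab'⟩ := concat_inj hM'.symm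
            subst hM; subst hab'
            rw [fd_concat (L := M ++ [a])]
            exact le_of_lt hup
  intro w hw
  obtain ⟨L, hcL, rfl⟩ := gammaRel_red α (gammaRel_trans α (gammaRel_symm α hu) hw)
  exact (key L hcL).1

lemma last_orbit_not_T {x y₀ : Fin 3 → ℤ}
    (H : ∀ z, gammaRel α x z → onV α β z ∧ ¬ inU α β z)
    (hy : gammaRel α x y₀)
    (hlast : ∀ i j, delta y₀ ≤ delta (vAct α j (vAct α i y₀)))
    (hT' : ¬ inT' α β y₀) :
    ∀ w, gammaRel α x w → ¬ inT α β w := by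
  have key : ∀ L : List (Fin 3), List.Chain' (· ≠ ·) L →
      ¬ inT α β (fd α L y₀) ∧
      (L = [] ∨ (∃ a, L = [a]) ∨
        ∃ M a, L = M ++ [a] ∧ delta (fd α M y₀) ≤ delta (fd α L y₀)) := by
    intro L
    induction L using List.reverseRecOn with
    | nil =>
        intro _
        exact ⟨fun h => hT' ⟨y₀, h, Or.inr ⟨0, 0, (vAct_invol α 0 y₀).symm⟩⟩, Or.inl rfl⟩
    | append_singleton L b ih =>
        intro hc
        obtain ⟨hcL, -, hrel⟩ := List.isChain_append.mp hc
        obtain ⟨ihT, ihtag⟩ := ih hcL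
        rcases ihtag with rfl | ⟨a, rfl⟩ | ⟨M, a, rfl, hmono⟩
        · refine ⟨fun h => hT' ⟨fd α ([] ++ [b]) y₀, h, Or.inl ⟨b, ?_⟩⟩,
            Or.inr (Or.inl ⟨b, by simp⟩)⟩
          rw [fd_concat, fd_nil, vAct_invol]
        · have hab : a ≠ b := hrel a (by simp) b (by simp)
          have hfd2 : fd α ([a] ++ [b]) y₀ = vAct α b (vAct α a y₀) := by
            rw [fd_concat]; rfl
          have hstep : delta (vAct α a y₀) ≤ delta (vAct α b (vAct α a y₀)) := by
            by_cases hcase : delta y₀ ≤ delta (vAct α a y₀)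
            · have hz1rel : gammaRel α x (vAct α a y₀) :=
                gammaRel_trans α hy (gammaRel_vAct α y₀ a)
              obtain ⟨hV1, hU1⟩ := H _ hz1rel
              have hT1 : ¬ inT α β (vAct α a y₀) := ihT
              have hback : delta (vAct α a (vAct α a y₀)) ≤ delta (vAct α a y₀) := by
                rw [vAct_invol]; exact hcase
              exact le_of_lt (walk_up α β hV1 hT1 hU1 hab hback)
            · push_neg at hcase
              exact le_trans (le_of_lt hcase) (hlast a b)
          constructor
          · intro h
            rw [hfd2] at h
            refine hT' ⟨_, h, Or.inr ⟨b, a, ?_⟩⟩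
            rw [vAct_invol, vAct_invol]
          · exact Or.inr (Or.inr ⟨[a], b, rfl, by rw [hfd2]; exact hstep⟩)
        · have hab : a ≠ b := hrel a (by simp) b (by simp)
          have hvrel : gammaRel α x (fd α (M ++ [a]) y₀) :=
            gammaRel_trans α hy ⟨M ++ [a], rfl⟩
          obtain ⟨hVv, hUv⟩ := H _ hvrel
          have hback : delta (vAct α a (fd α (M ++ [a]) y₀)) ≤ delta (fd α (M ++ [a]) y₀) := by
            rw [fd_concat, vAct_invol, ← fd_concat]
            exact hmono
          have hup := walk_up α β hVv ihT hUv hab hback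
          constructor
          · intro h
            rw [fd_concat (L := M ++ [a])] at h
            exact absurd (into_T_dec α β hVv ihT h) (not_lt.2 (le_of_lt hup))
          · refine Or.inr (Or.inr ⟨M ++ [a], b, rfl, ?_⟩)
            rw [fd_concat (L := M ++ [a])]
            exact le_of_lt hup
  intro w hw h
  obtain ⟨L, hcL, rfl⟩ := gammaRel_red α (gammaRel_trans α (gammaRel_symm α hy) hw)
  exact (key L hcL).1 h


lemma fin3_triple : ∀ i j l : Fin 3, i ≠ j → i ≠ l → j ≠ l →
    (i=0∧j=1∧l=2)∨(i=0∧j=2∧l=1)∨(i=1∧j=0∧l=2)∨(i=1∧j=2∧l=0)∨(i=2∧j=0∧l=1)∨(i=2∧j=1∧l=0) := by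
  decide

lemma fin3_cover : ∀ i j l k : Fin 3, i ≠ j → i ≠ l → j ≠ l → k = i ∨ k = j ∨ k = l := by
  decide

lemma onV_sym {x : Fin 3 → ℤ} (hV : onV α β x) (i j l : Fin 3)
    (hij : i ≠ j) (hil : i ≠ l) (hjl : j ≠ l) :
    x i^2 + x j^2 + x l^2 + x i * x j * x l
      - α i * x i - α j * x j - α l * x l - β = 0 := by
  unfold onV at hV
  rcases fin3_triple i j l hij hil hjl with ⟨rfl,rfl,rfl⟩|⟨rfl,rfl,rfl⟩|⟨rfl,rfl,rfl⟩|⟨rfl,rfl,rfl⟩|⟨rfl,rfl,rfl⟩|⟨rfl,rfl,rfl⟩ <;>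
    linear_combination hV

/-- bound for the α vector -/
def aB (α : Fin 3 → ℤ) : ℤ := |α 0| + |α 1| + |α 2|

lemma abs_α_le (i : Fin 3) : |α i| ≤ aB α := by
  have h0 := abs_nonneg (α 0); have h1 := abs_nonneg (α 1); have h2 := abs_nonneg (α 2)
  rcases fin3_cases i with rfl|rfl|rfl <;> (unfold aB; linarith)

lemma aB_nonneg : 0 ≤ aB α := by
  have h0 := abs_nonneg (α 0); have h1 := abs_nonneg (α 1); have h2 := abs_nonneg (α 2)
  unfold aB; linarith

lemma small_coord_bound {x : Fin 3 → ℤ} (hV : onV α β x) {i j l : Fin 3}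
    (hij : i ≠ j) (hil : i ≠ l) (hjl : j ≠ l) (hi : |x i| ≤ 1) :
    |x j| + |x l| ≤ 8 * aB α + 4 * |β| + 4 := by
  have E := onV_sym α β hV i j l hij hil hjl
  set a := x i with ha; set b := x j with hb; set c := x l with hc
  have hAn := aB_nonneg α
  have hBn : (0:ℤ) ≤ |β| := abs_nonneg β
  have hβ := abs_le.mp (le_refl |β|)
  have habs : |a * b * c| ≤ |b| * |c| := by
    rw [abs_mul, abs_mul]
    have h' : 0 ≤ (1 - |a|) * (|b| * |c|) :=
      mul_nonneg (by linarith) (mul_nonneg (abs_nonneg b) (abs_nonneg c))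
    nlinarith [h']
  have habs' := abs_le.mp habs
  have hαjb : α j * b ≤ aB α * |b| := by
    calc α j * b ≤ |α j * b| := le_abs_self _
      _ = |α j| * |b| := abs_mul _ _
      _ ≤ aB α * |b| := mul_le_mul_of_nonneg_right (abs_α_le α j) (abs_nonneg b)
  have hαlc : α l * c ≤ aB α * |c| := by
    calc α l * c ≤ |α l * c| := le_abs_self _
      _ = |α l| * |c| := abs_mul _ _
      _ ≤ aB α * |c| := mul_le_mul_of_nonneg_right (abs_α_le α l) (abs_nonneg c)
  have hαia : α i * a ≤ aB α := by
    calc α i * a ≤ |α i * a| := le_abs_self _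
      _ = |α i| * |a| := abs_mul _ _
      _ ≤ aB α * 1 := mul_le_mul (abs_α_le α i) hi (abs_nonneg a) hAn
      _ = aB α := mul_one _
  have h1 : |b| ^ 2 + |c| ^ 2 ≤ |b| * |c| + aB α + aB α * |b| + aB α * |c| + |β| := by
    nlinarith [E, habs'.1, hαjb, hαlc, hαia, hβ.2, sq_abs b, sq_abs c, sq_nonneg a]
  nlinarith [h1, sq_nonneg (|b| - |c|), sq_nonneg (|b| + |c| - (8 * aB α + 4 * |β| + 4)),
    abs_nonneg b, abs_nonneg c]


lemma abs_ge_two {t : ℤ} (h : ¬ t ≤ 1) : 2 ≤ t := by omega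

lemma inT_bound {x : Fin 3 → ℤ} (hx : inT α β x) (k : Fin 3) :
    |x k| ≤ 6 * aB α * aB α + 30 * aB α + 5 * |β| + 20 := by
  obtain ⟨hV, σ, hcase⟩ := hx
  have hAn := aB_nonneg α
  have hBn := abs_nonneg β
  have hij : σ 0 ≠ σ 1 := fun h => (by decide : (0:Fin 3) ≠ 1) (σ.injective h)
  have hil : σ 0 ≠ σ 2 := fun h => (by decide : (0:Fin 3) ≠ 2) (σ.injective h)
  have hjl : σ 1 ≠ σ 2 := fun h => (by decide : (1:Fin 3) ≠ 2) (σ.injective h)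
  have hcover := fin3_cover (σ 0) (σ 1) (σ 2) k hij hil hjl
  have h0 := abs_nonneg (x (σ 0))
  have h1 := abs_nonneg (x (σ 1))
  have h2 := abs_nonneg (x (σ 2))
  rcases hcase with h | h
  · have hs := small_coord_bound α β hV hij hil hjl h
    rcases hcover with rfl | rfl | rfl <;> nlinarith [sq_nonneg (aB α)]
  · by_cases hj : |x (σ 1)| ≤ 1
    · have hs := small_coord_bound α β hV (i := σ 1) (j := σ 0) (l := σ 2)
        hij.symm hjl hil hj
      rcases hcover with rfl | rfl | rfl <;> nlinarith [sq_nonneg (aB α)]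
    · by_cases hl : |x (σ 2)| ≤ 1
      · have hs := small_coord_bound α β hV (i := σ 2) (j := σ 0) (l := σ 1)
          hil.symm hjl.symm hij hl
        rcases hcover with rfl | rfl | rfl <;> nlinarith [sq_nonneg (aB α)]
      · have hj2 : 2 ≤ |x (σ 1)| := abs_ge_two hj
        have hl2 : 2 ≤ |x (σ 2)| := abs_ge_two hl
        have E := onV_sym α β hV (σ 0) (σ 1) (σ 2) hij hil hjl
        have hM : |x (σ 1) * x (σ 2)| ≤ 3 * aB α + 4 := by
          refine le_trans h (max_le ?_ (by linarith))
          have := abs_α_le α (σ 0); linarith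
        rw [abs_mul] at hM
        have hp : |x (σ 1)| ≤ 3 * aB α + 4 := by nlinarith
        have hq : |x (σ 2)| ≤ 3 * aB α + 4 := by nlinarith
        have habc : -( |x (σ 0)| * (|x (σ 1)| * |x (σ 2)|) ) ≤
            x (σ 0) * x (σ 1) * x (σ 2) := by
          have he : |x (σ 0) * x (σ 1) * x (σ 2)| = |x (σ 0)| * (|x (σ 1)| * |x (σ 2)|) := by
            rw [abs_mul, abs_mul]; ring
          exact he ▸ neg_abs_le _
        have hprodb : |x (σ 0)| * (|x (σ 1)| * |x (σ 2)|) ≤ |x (σ 0)| * (3 * aB α + 4) :=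
          mul_le_mul_of_nonneg_left hM h0
        have hα0 : α (σ 0) * x (σ 0) ≤ aB α * |x (σ 0)| := by
          calc α (σ 0) * x (σ 0) ≤ |α (σ 0) * x (σ 0)| := le_abs_self _
            _ = |α (σ 0)| * |x (σ 0)| := abs_mul _ _
            _ ≤ aB α * |x (σ 0)| := mul_le_mul_of_nonneg_right (abs_α_le α _) h0
        have hα1 : α (σ 1) * x (σ 1) ≤ aB α * |x (σ 1)| := by
          calc α (σ 1) * x (σ 1) ≤ |α (σ 1) * x (σ 1)| := le_abs_self _
            _ = |α (σ 1)| * |x (σ 1)| := abs_mul _ _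
            _ ≤ aB α * |x (σ 1)| := mul_le_mul_of_nonneg_right (abs_α_le α _) h1
        have hα2 : α (σ 2) * x (σ 2) ≤ aB α * |x (σ 2)| := by
          calc α (σ 2) * x (σ 2) ≤ |α (σ 2) * x (σ 2)| := le_abs_self _
            _ = |α (σ 2)| * |x (σ 2)| := abs_mul _ _
            _ ≤ aB α * |x (σ 2)| := mul_le_mul_of_nonneg_right (abs_α_le α _) h2
        have hkey : |x (σ 0)| ^ 2 ≤ (4 * aB α + 4) * |x (σ 0)|
            + 2 * aB α * (3 * aB α + 4) + |β| := by
          linarith [E, sq_nonneg (x (σ 1)), sq_nonneg (x (σ 2)), sq_abs (x (σ 0)),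
            sq_abs (x (σ 1)), sq_abs (x (σ 2)),
            (abs_le.mp (le_refl |β|)).2, habc, hprodb, hα0, hα1, hα2,
            mul_le_mul_of_nonneg_left hp hAn, mul_le_mul_of_nonneg_left hq hAn]
        have ha : |x (σ 0)| ≤ 6 * aB α * aB α + 12 * aB α + 4 + |β| := by
          by_contra hcon
          push_neg at hcon
          have hCn : (0:ℤ) ≤ 6 * aB α * aB α + 8 * aB α + |β| := by positivity
          have hu1 : 6 * aB α * aB α + 12 * aB α + 4 + |β| + 1 ≤ |x (σ 0)| :=
            Int.lt_iff_add_one_le.mp hcon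
          have hmm : |x (σ 0)| * (6 * aB α * aB α + 12 * aB α + 4 + |β| + 1) ≤
              |x (σ 0)| * |x (σ 0)| := mul_le_mul_of_nonneg_left hu1 h0
          have hCa : 0 ≤ (|x (σ 0)| - 1) * (6 * aB α * aB α + 8 * aB α + |β|) :=
            mul_nonneg (by linarith) hCn
          have hsq : |x (σ 0)| * |x (σ 0)| = |x (σ 0)| ^ 2 := by ring
          linarith [hkey, hmm, hCa, hsq]
        rcases hcover with rfl | rfl | rfl <;> linarith [mul_nonneg hAn hAn]

lemma inT_finite : {y : Fin 3 → ℤ | inT α β y}.Finite := by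
  set B := 6 * aB α * aB α + 30 * aB α + 5 * |β| + 20 with hB
  have : {y : Fin 3 → ℤ | inT α β y} ⊆ Set.pi Set.univ (fun _ => Set.Icc (-B) B) := by
    intro y hy i _
    exact Set.mem_Icc.mpr (abs_le.mp (inT_bound α β hy i))
  exact Set.Finite.subset (Set.Finite.pi fun i => Set.finite_Icc _ _) this

lemma inT'_finite : {y : Fin 3 → ℤ | inT' α β y}.Finite := by
  have hsub : {y : Fin 3 → ℤ | inT' α β y} ⊆
      (⋃ i : Fin 3, vAct α i '' {y | inT α β y}) ∪
      ⋃ i : Fin 3, ⋃ j : Fin 3, (fun z => vAct α j (vAct α i z)) '' {y | inT α β y} := by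
    rintro y ⟨t, ht, ⟨i, rfl⟩ | ⟨i, j, rfl⟩⟩
    · exact Or.inl (Set.mem_iUnion.2 ⟨i, ⟨t, ht, rfl⟩⟩)
    · exact Or.inr (Set.mem_iUnion.2 ⟨i, Set.mem_iUnion.2 ⟨j, ⟨t, ht, rfl⟩⟩⟩)
  refine Set.Finite.subset (Set.Finite.union ?_ ?_) hsub
  · exact Set.finite_iUnion fun i => (inT_finite α β).image _
  · exact Set.finite_iUnion fun i => Set.finite_iUnion fun j => (inT_finite α β).image _

lemma delta_eq_finite (m : ℤ) : {y : Fin 3 → ℤ | delta y = m}.Finite := by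
  have : {y : Fin 3 → ℤ | delta y = m} ⊆ Set.pi Set.univ (fun _ => Set.Icc (-m) m) := by
    intro y hy i _
    have h0 := abs_nonneg (y 0); have h1 := abs_nonneg (y 1); have h2 := abs_nonneg (y 2)
    have hd : |y 0| + |y 1| + |y 2| = m := hy
    have : |y i| ≤ m := by rcases fin3_cases i with rfl | rfl | rfl <;> linarith
    exact Set.mem_Icc.mpr (abs_le.mp this)
  exact Set.Finite.subset (Set.Finite.pi fun i => Set.finite_Icc _ _) this


lemma orbit_not_U {x : Fin 3 → ℤ}
    (horb : ∀ y, gamma0Rel α x y → onV α β y ∧ ¬ inU' α β y) :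
    ∀ z, gammaRel α x z → ¬ inU α β z := by
  rintro z ⟨L, rfl⟩ hUz
  rcases Nat.even_or_odd L.length with he | ho
  · have h0 : gamma0Rel α x (fd α L x) := ⟨L, Nat.even_iff.mp he, rfl⟩
    exact (horb _ h0).2 ⟨fd α L x, hUz, Or.inr ⟨0, 0, (vAct_invol α 0 _).symm⟩⟩
  · have hL : L ≠ [] := by
      intro h; subst h; simp [Nat.odd_iff] at ho
    obtain ⟨M, a, rfl⟩ := (List.eq_nil_or_concat L).resolve_left hL
    simp only [List.concat_eq_append] at hUz ho ⊢
    have hM : M.length % 2 = 0 := by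
      rw [Nat.odd_iff] at ho
      simp only [List.length_append, List.length_singleton] at ho
      omega
    have h0 : gamma0Rel α x (fd α M x) := ⟨M, hM, rfl⟩
    refine (horb _ h0).2 ⟨fd α (M ++ [a]) x, hUz, Or.inl ⟨a, ?_⟩⟩
    rw [fd_concat, vAct_invol]

end Cor35

open Cor35 in
theorem cor_3_5' (α : Fin 3 → ℤ) (β : ℤ) (x : Fin 3 → ℤ)
    (hx : onV α β x)
    (horb : ∀ y, gamma0Rel α x y → onV α β y ∧ ¬ inU' α β y) :
    {y | gamma0Rel α x y ∧
      ∀ i j : Fin 3, delta y ≤ delta (vAct α j (vAct α i y))}.Finite ∧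
    ((∀ y, gamma0Rel α x y →
        (∀ i j : Fin 3, delta y ≤ delta (vAct α j (vAct α i y))) →
        inT' α β y) ∨
      (∀ y, gamma0Rel α x y →
        (∀ i j : Fin 3, delta y ≤ delta (vAct α j (vAct α i y))) →
        onV α β y ∧ ¬ inT' α β y ∧ ¬ inU' α β y)) := by
  by_cases hall : ∀ y, gamma0Rel α x y →
      (∀ i j : Fin 3, delta y ≤ delta (vAct α j (vAct α i y))) → inT' α β y
  · refine ⟨Set.Finite.subset (inT'_finite α β) ?_, Or.inl hall⟩
    rintro y ⟨hy0, hlast⟩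
    exact hall y hy0 hlast
  · push_neg at hall
    obtain ⟨y₀, hy₀0, hlast₀, hT'₀⟩ := hall
    have hy₀rel : gammaRel α x y₀ := gamma0Rel_gammaRel α hy₀0
    have hnotU : ∀ z, gammaRel α x z → ¬ inU α β z := orbit_not_U α β horb
    have H2 : ∀ z, gammaRel α x z → onV α β z ∧ ¬ inU α β z :=
      fun z hz => ⟨onV_gammaRel α β hx hz, hnotU z hz⟩
    have HT : ∀ z, gammaRel α x z → ¬ inT α β z :=
      last_orbit_not_T α β H2 hy₀rel hlast₀ hT'₀
    have Hfull : ∀ z, gammaRel α x z → onV α β z ∧ ¬ inT α β z ∧ ¬ inU α β z :=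
      fun z hz => ⟨onV_gammaRel α β hx hz, HT z hz, hnotU z hz⟩
    -- the minimum of delta on the orbit
    set S : Set ℕ := {n | ∃ z, gammaRel α x z ∧ delta z = (n : ℤ)} with hS
    have hSne : S.Nonempty :=
      ⟨(delta x).toNat, x, gammaRel_refl α x, (Int.toNat_of_nonneg (delta_nonneg x)).symm⟩
    have hmem : sInf S ∈ S := Nat.sInf_mem hSne
    obtain ⟨z₀, hz₀rel, hz₀⟩ := hmem
    have hmle : ∀ z, gammaRel α x z → ((sInf S : ℕ) : ℤ) ≤ delta z := by
      intro z hz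
      have h1 : delta z = (((delta z).toNat : ℕ) : ℤ) :=
        (Int.toNat_of_nonneg (delta_nonneg z)).symm
      rw [h1]
      have hmemS : (delta z).toNat ∈ S := by rw [hS]; exact ⟨z, hz, h1⟩
      exact_mod_cast Nat.sInf_le hmemS
    have hdesc : ∀ u, gammaRel α x u → (∀ i, delta u ≤ delta (vAct α i u)) →
        delta u = ((sInf S : ℕ) : ℤ) := by
      intro u hu hmin
      refine le_antisymm ?_ (hmle u hu)
      rw [← hz₀]
      exact min_spread α β Hfull hu hmin z₀ hz₀rel
    have hG : ∀ y, gamma0Rel α x y →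
        (∀ i j : Fin 3, delta y ≤ delta (vAct α j (vAct α i y))) →
        delta y = ((sInf S : ℕ) : ℤ) ∨ ∃ i, delta (vAct α i y) = ((sInf S : ℕ) : ℤ) := by
      intro y hy0 hlast
      have hyrel := gamma0Rel_gammaRel α hy0
      by_cases h1 : ∀ i, delta y ≤ delta (vAct α i y)
      · exact Or.inl (hdesc y hyrel h1)
      · push_neg at h1
        obtain ⟨i, hi⟩ := h1
        refine Or.inr ⟨i, ?_⟩
        have hzrel : gammaRel α x (vAct α i y) :=
          gammaRel_trans α hyrel (gammaRel_vAct α y i)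
        by_cases h2 : ∀ j, delta (vAct α i y) ≤ delta (vAct α j (vAct α i y))
        · exact hdesc _ hzrel h2
        · exfalso
          push_neg at h2
          obtain ⟨j, hj⟩ := h2
          by_cases hji : j = i
          · subst hji
            rw [vAct_invol] at hj
            exact absurd hj (not_lt.2 (le_of_lt hi))
          · linarith [hlast i j]
    constructor
    · apply Set.Finite.subset (Set.Finite.union (delta_eq_finite ((sInf S : ℕ) : ℤ))
        (Set.finite_iUnion fun i : Fin 3 =>
          (delta_eq_finite ((sInf S : ℕ) : ℤ)).image (vAct α i)))
      rintro y ⟨hy0, hlast⟩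
      rcases hG y hy0 hlast with h | ⟨i, h⟩
      · exact Or.inl h
      · exact Or.inr (Set.mem_iUnion.2 ⟨i, ⟨vAct α i y, h, vAct_invol α i y⟩⟩)
    · refine Or.inr fun y hy0 hlast => ⟨(horb y hy0).1, fun hT'y => ?_, (horb y hy0).2⟩
      obtain ⟨t, htT, hcase⟩ := hT'y
      have hyrel := gamma0Rel_gammaRel α hy0
      have htrel : gammaRel α x t := by
        rcases hcase with ⟨i, rfl⟩ | ⟨i, j, rfl⟩
        · refine gammaRel_trans α hyrel ⟨[i], ?_⟩
          show t = fd α [i] (vAct α i t)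
          rw [fd_cons, fd_nil, vAct_invol]
        · refine gammaRel_trans α hyrel ⟨[j, i], ?_⟩
          show t = fd α [j, i] (vAct α j (vAct α i t))
          rw [fd_cons, fd_cons, fd_nil, vAct_invol, vAct_invol]
      exact HT t htrel htT


/-- If the `Γ₀`-orbit of `x` avoids `𝔘'`, then its set of MCG-last vertices
is finite, and either all of them are in `𝔗'` or all are in
`V(ℤ) \ (𝔗' ∪ 𝔘')`. -/
theorem cor_3_5 (α : Fin 3 → ℤ) (β : ℤ) (x : Fin 3 → ℤ)
    (hx : onV α β x)
    (horb : ∀ y, gamma0Rel α x y → onV α β y ∧ ¬ inU' α β y) :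
    {y | gamma0Rel α x y ∧
      ∀ i j : Fin 3, delta y ≤ delta (vAct α j (vAct α i y))}.Finite ∧
    ((∀ y, gamma0Rel α x y →
        (∀ i j : Fin 3, delta y ≤ delta (vAct α j (vAct α i y))) →
        inT' α β y) ∨
      (∀ y, gamma0Rel α x y →
        (∀ i j : Fin 3, delta y ≤ delta (vAct α j (vAct α i y))) →
        onV α β y ∧ ¬ inT' α β y ∧ ¬ inU' α β y)) := by
  exact cor_3_5' α β x hx horb
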